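/- There exists an instance with 4 women and 4 men such that: (1) no single woman can obtain a strictly better partner by unilaterally misreporting her preferences to the men-proposing Gale-Shapley mechanism; (2) there exist false preference reports for two women w1, w2 under which both are strictly better-off; and (3) the resulting matching is not stable under the true preferences. -/

import Mathlib

namespace GS

/-- The `k` most-preferred elements of `S` according to the rank function `rank`
(lower rank = more preferred); if `S` has at most `k` elements this is all of `S`. -/
def topk {α : Type*} [DecidableEq α] (rank : α → ℕ) (k : ℕ) (S : Finset α) : Finset α :=
  S.filter fun a => (S.filter fun b => rank b < rank a).card < k

/-- An instance of the stable-matching problem with `n` women and `n` men.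
`mpref m w` is the rank man `m` assigns to woman `w` (lower = more preferred),
and `wpref w m` is the rank woman `w` assigns to man `m`. -/
structure Instance (n : ℕ) where
  mpref : Fin n → Fin n → ℕ
  wpref : Fin n → Fin n → ℕ
  mprefInj : ∀ m, Function.Injective (mpref m)
  wprefInj : ∀ w, Function.Injective (wpref w)

variable {n : ℕ}

/-- `prefers p a b` : `a` is strictly preferred to `b` under rank function `p`. -/
def prefers (p : Fin n → ℕ) (a b : Fin n) : Prop := p a < p b

/-- Given the current state `avail m` (the women who have not yet rejected man `m`),
the set of women man `m` proposes to tonight: his most-preferred available woman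
(a singleton, or empty if no woman is available). -/
def proposals (I : Instance n) (avail : Fin n → Finset (Fin n)) (m : Fin n) :
    Finset (Fin n) := topk (I.mpref m) 1 (avail m)

/-- The men proposing to woman `w` tonight. -/
def proposersOf (I : Instance n) (avail : Fin n → Finset (Fin n)) (w : Fin n) :
    Finset (Fin n) := Finset.univ.filter fun m => w ∈ proposals I avail m

/-- The men rejected by woman `w` tonight: all of tonight's proposers except
her most-preferred one. -/
def rejectedBy (I : Instance n) (avail : Fin n → Finset (Fin n)) (w : Fin n) :
    Finset (Fin n) := proposersOf I avail w \ topk (I.wpref w) 1 (proposersOf I avail w)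

/-- One night of the men-proposing Gale-Shapley algorithm. -/
def step (I : Instance n) (avail : Fin n → Finset (Fin n)) :
    Fin n → Finset (Fin n) :=
  fun m => (avail m).filter fun w => m ∉ rejectedBy I avail w

/-- `nights I t m` : the set of women who have not rejected man `m` before night `t`
(initially all women). -/
def nights (I : Instance n) (t : ℕ) : Fin n → Finset (Fin n) :=
  (step I)^[t] (fun _ => Finset.univ)

/-- The algorithm has terminated by night `T`: no man is rejected on night `T`. -/
def Stopped (I : Instance n) (T : ℕ) : Prop := step I (nights I T) = nights I T

/-- On night `T`, each man `m` serenades exactly under the window of `μ m`. -/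
def MatchesAt (I : Instance n) (T : ℕ) (μ : Fin n ≃ Fin n) : Prop :=
  ∀ m, proposals I (nights I T) m = {μ m}

/-- The bijection `μ` (from men to women) is the outcome of the men-proposing
Gale-Shapley algorithm on instance `I`: for some night `T` no rejection occurs and
every man `m` is matched with `μ m`. -/
def IsGSMatching (I : Instance n) (μ : Fin n ≃ Fin n) : Prop :=
  ∃ T, Stopped I T ∧ MatchesAt I T μ

/-- Stability of a matching `μ` (men to women): there is no unmatched pair `(w, m)`
each of whom strictly prefers the other to their partner under `μ`. -/
def Stable (I : Instance n) (μ : Fin n ≃ Fin n) : Prop :=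
  ¬ ∃ m w, μ m ≠ w ∧ I.mpref m w < I.mpref m (μ m) ∧ I.wpref w m < I.wpref w (μ.symm w)

/-- The instance in which the women in `L` replace their true preferences by the
false preference rankings `f`, everyone else being truthful. -/
def liarInstance (I : Instance n) (L : Finset (Fin n))
    (f : Fin n → Fin n → ℕ) (hf : ∀ w, Function.Injective (f w)) : Instance n where
  mpref := I.mpref
  wpref := fun w => if w ∈ L then f w else I.wpref w
  mprefInj := I.mprefInj
  wprefInj := fun w => by split_ifs; exacts [hf w, I.wprefInj w]

end GS


section Aux
open GS

variable {n : ℕ}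

lemma nights_succ (I : Instance n) (t : ℕ) : nights I (t + 1) = step I (nights I t) :=
  Function.iterate_succ_apply' _ _ _

lemma stopped_stable (I : Instance n) {T : ℕ} (h : Stopped I T) :
    ∀ s, nights I (T + s) = nights I T := by
  intro s
  induction s with
  | zero => rfl
  | succ s ih =>
      have : T + (s + 1) = (T + s) + 1 := by omega
      rw [this, nights_succ, ih]
      exact h

lemma stopped_ge (I : Instance n) {T T' : ℕ} (h : Stopped I T) (hle : T ≤ T') :
    nights I T' = nights I T := by
  obtain ⟨s, rfl⟩ := Nat.exists_eq_add_of_le hle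
  exact stopped_stable I h s

lemma nights_eq_of_two_stopped (I : Instance n) {T T' : ℕ}
    (h : Stopped I T) (h' : Stopped I T') : nights I T = nights I T' := by
  rcases le_total T T' with hle | hle
  · exact (stopped_ge I h hle).symm
  · exact stopped_ge I h' hle

/-- Men's true preferences. -/
def mp : Fin 4 → Fin 4 → ℕ := ![![0,2,1,3], ![2,0,1,3], ![2,1,0,3], ![0,2,3,1]]
/-- Women's true preferences. -/
def wp : Fin 4 → Fin 4 → ℕ := ![![1,2,0,3], ![1,2,0,3], ![1,0,2,3], ![0,1,2,3]]

/-- The honest instance. -/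
def I0 : Instance 4 := ⟨mp, wp, by decide, by decide⟩

/-- The instance where woman `w` lies with the canonical (permutation) report `p`. -/
def canonLiar (w : Fin 4) (p : Equiv.Perm (Fin 4)) : Instance 4 :=
  ⟨mp, fun w' => if w' = w then (fun m => (p m : ℕ)) else wp w', by decide,
    fun w' => by
      split_ifs
      · exact Fin.val_injective.comp p.injective
      · exact I0.wprefInj w'⟩

lemma liar_wpref (I : Instance n) (L : Finset (Fin n)) (f : Fin n → Fin n → ℕ)
    (hf : ∀ w, Function.Injective (f w)) :
    (liarInstance I L f hf).wpref = fun w => if w ∈ L then f w else I.wpref w := rfl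

set_option maxRecDepth 100000 in
set_option maxHeartbeats 4000000 in
lemma key_single : ∀ p : Equiv.Perm (Fin 4), ∀ w : Fin 4,
    (∀ m, step (canonLiar w p) (nights (canonLiar w p) 5) m = nights (canonLiar w p) 5 m) ∧
    (∀ m, w ∈ proposals (canonLiar w p) (nights (canonLiar w p) 5) m →
      ¬ (wp w m < wp w w)) := by decide

set_option maxRecDepth 100000 in
set_option maxHeartbeats 1000000 in
lemma key_honest : ∀ m : Fin 4,
    step I0 (nights I0 1) m = nights I0 1 m ∧
    proposals I0 (nights I0 1) m = {m} := by decide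

/-- The joint lie of women 0 and 1. -/
def f2 : Fin 4 → Fin 4 → ℕ := ![![2,3,0,1], ![0,2,1,3], ![0,1,2,3], ![0,1,2,3]]

lemma hf2 : ∀ v, Function.Injective (f2 v) := by decide

/-- The joint-liar instance. -/
def J2 : Instance 4 := liarInstance I0 {0, 1} f2 hf2

/-- The matching produced by the joint lie. -/
def N2 : Fin 4 ≃ Fin 4 :=
  ⟨![1,2,0,3], ![2,0,1,3], by decide, by decide⟩

set_option maxRecDepth 100000 in
set_option maxHeartbeats 1000000 in
lemma key_joint : ∀ m : Fin 4,
    step J2 (nights J2 6) m = nights J2 6 m ∧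
    proposals J2 (nights J2 6) m = {N2 m} := by decide

lemma topk_congr {α : Type*} [DecidableEq α] {r1 r2 : α → ℕ}
    (h : ∀ a b, r1 a < r1 b ↔ r2 a < r2 b) (k : ℕ) (S : Finset α) :
    topk r1 k S = topk r2 k S := by
  unfold topk
  refine Finset.filter_congr fun a _ => ?_
  rw [Finset.filter_congr (fun b _ => h b a)]

lemma proposals_congr {I₁ I₂ : Instance n} (hm : I₁.mpref = I₂.mpref)
    (a : Fin n → Finset (Fin n)) (m : Fin n) :
    proposals I₁ a m = proposals I₂ a m := by
  unfold proposals; rw [hm]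

lemma step_congr {I₁ I₂ : Instance n} (hm : I₁.mpref = I₂.mpref)
    (hw : ∀ w a b, I₁.wpref w a < I₁.wpref w b ↔ I₂.wpref w a < I₂.wpref w b)
    (a : Fin n → Finset (Fin n)) : step I₁ a = step I₂ a := by
  have hpo : ∀ w, proposersOf I₁ a w = proposersOf I₂ a w := by
    intro w; unfold proposersOf
    exact Finset.filter_congr fun m _ => by rw [proposals_congr hm]
  have hrej : ∀ w, rejectedBy I₁ a w = rejectedBy I₂ a w := by
    intro w; unfold rejectedBy
    rw [hpo w, topk_congr (hw w)]
  funext m; unfold step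
  exact Finset.filter_congr fun w _ => by rw [hrej w]

lemma nights_zero (I : Instance n) : nights I 0 = fun _ => Finset.univ := rfl

lemma nights_congr {I₁ I₂ : Instance n} (hm : I₁.mpref = I₂.mpref)
    (hw : ∀ w a b, I₁.wpref w a < I₁.wpref w b ↔ I₂.wpref w a < I₂.wpref w b)
    (t : ℕ) : nights I₁ t = nights I₂ t := by
  induction t with
  | zero => rw [nights_zero, nights_zero]
  | succ t ih =>
      rw [nights_succ, nights_succ, ih]
      exact step_congr hm hw _

/-- The canonical rank function associated to an arbitrary injective rank `f`. -/
def cRank (f : Fin 4 → ℕ) (m : Fin 4) : Fin 4 :=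
  ⟨(Finset.univ.filter fun x => f x < f m).card, by
    have h1 : (Finset.univ.filter fun x => f x < f m) ⊆ Finset.univ.erase m := by
      intro x hx
      rw [Finset.mem_filter] at hx
      refine Finset.mem_erase.2 ⟨fun he => ?_, Finset.mem_univ x⟩
      rw [he] at hx
      exact lt_irrefl _ hx.2
    have h2 := Finset.card_le_card h1
    have h3 : (Finset.univ.erase m).card = 3 := by
      rw [Finset.card_erase_of_mem (Finset.mem_univ m), Finset.card_univ]
      rfl
    omega⟩

lemma cRank_lt_of_lt {f : Fin 4 → ℕ} {a b : Fin 4} (hab : f a < f b) :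
    ((cRank f a : ℕ)) < (cRank f b : ℕ) := by
  show (Finset.univ.filter fun x => f x < f a).card < (Finset.univ.filter fun x => f x < f b).card
  apply Finset.card_lt_card
  rw [Finset.ssubset_iff_of_subset]
  · exact ⟨a, Finset.mem_filter.2 ⟨Finset.mem_univ a, hab⟩,
      fun h => lt_irrefl _ (Finset.mem_filter.1 h).2⟩
  · intro x hx
    rw [Finset.mem_filter] at hx ⊢
    exact ⟨hx.1, lt_trans hx.2 hab⟩

lemma cRank_lt_iff {f : Fin 4 → ℕ} (hf : Function.Injective f) (a b : Fin 4) :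
    ((cRank f a : ℕ)) < (cRank f b : ℕ) ↔ f a < f b := by
  constructor
  · intro h
    rcases lt_trichotomy (f a) (f b) with h1 | h1 | h1
    · exact h1
    · exact absurd h (by rw [hf h1]; exact lt_irrefl _)
    · exact absurd (cRank_lt_of_lt h1) (by omega)
  · exact cRank_lt_of_lt

lemma cRank_injective {f : Fin 4 → ℕ} (hf : Function.Injective f) :
    Function.Injective (cRank f) := by
  intro a b hab
  by_contra hne
  rcases lt_trichotomy (f a) (f b) with h1 | h1 | h1
  · have := cRank_lt_of_lt (f := f) h1; rw [hab] at this; omega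
  · exact hne (hf h1)
  · have := cRank_lt_of_lt (f := f) h1; rw [hab] at this; omega


end Aux

open GS in
/-- There is a 4-women/4-men instance in which (1) no single woman can obtain a
strictly better partner by unilaterally misreporting, (2) two women can jointly
misreport so that both are strictly better-off, and (3) the resulting matching is
not stable under the true preferences. -/
theorem exists_profitable_joint_lie :
    ∃ (I : GS.Instance 4) (O : Fin 4 ≃ Fin 4), IsGSMatching I O ∧
      (∀ (w : Fin 4) (f : Fin 4 → Fin 4 → ℕ) (hf : ∀ v, Function.Injective (f v))
        (N : Fin 4 ≃ Fin 4), IsGSMatching (liarInstance I {w} f hf) N →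
          ¬ prefers (I.wpref w) (N.symm w) (O.symm w)) ∧
      (∃ (w₁ w₂ : Fin 4), w₁ ≠ w₂ ∧
        ∃ (f : Fin 4 → Fin 4 → ℕ) (hf : ∀ v, Function.Injective (f v))
          (N : Fin 4 ≃ Fin 4),
          IsGSMatching (liarInstance I {w₁, w₂} f hf) N ∧
          prefers (I.wpref w₁) (N.symm w₁) (O.symm w₁) ∧
          prefers (I.wpref w₂) (N.symm w₂) (O.symm w₂) ∧
          ¬ Stable I N) := by
  classical
  refine ⟨I0, Equiv.refl _, ?_, ?_, ?_⟩
  · -- honest outcome is the identity matching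
    exact ⟨1, funext fun m => (key_honest m).1, fun m => (key_honest m).2⟩
  · -- no single woman benefits from lying
    intro w f hf N hN
    set Jf := liarInstance I0 {w} f hf with hJf
    have hinj : Function.Injective (cRank (f w)) := cRank_injective (hf w)
    let p : Equiv.Perm (Fin 4) :=
      Equiv.ofBijective (cRank (f w)) (Finite.injective_iff_bijective.1 hinj)
    set Jc := canonLiar w p with hJc
    have hm : Jf.mpref = Jc.mpref := rfl
    have hw : ∀ w' a b, Jf.wpref w' a < Jf.wpref w' b ↔ Jc.wpref w' a < Jc.wpref w' b := by
      intro w' a b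
      by_cases hww : w' = w
      · subst hww
        have h1 : Jf.wpref w' = f w' := by
          show (if w' ∈ ({w'} : Finset (Fin 4)) then f w' else I0.wpref w') = f w'
          rw [if_pos (Finset.mem_singleton_self w')]
        have h2 : Jc.wpref w' = fun m => ((p m : ℕ)) := by
          show (if w' = w' then (fun m => ((p m : ℕ))) else wp w') = _
          rw [if_pos rfl]
        rw [h1, h2]
        exact (cRank_lt_iff (hf w') a b).symm
      · have h1 : Jf.wpref w' = wp w' := by
          show (if w' ∈ ({w} : Finset (Fin 4)) then f w' else I0.wpref w') = wp w'
          rw [if_neg (by simpa using hww)]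
          rfl
        have h2 : Jc.wpref w' = wp w' := by
          show (if w' = w then (fun m => ((p m : ℕ))) else wp w') = wp w'
          rw [if_neg hww]
        rw [h1, h2]
    have hstopc : Stopped Jc 5 := funext fun m => ((key_single p w).1 m)
    have hstopf : Stopped Jf 5 := by
      unfold Stopped
      rw [nights_congr hm hw, step_congr hm hw]
      exact hstopc
    obtain ⟨T, hT, hM⟩ := hN
    have hnights : nights Jf T = nights Jf 5 := nights_eq_of_two_stopped Jf hT hstopf
    have hmem : w ∈ proposals Jf (nights Jf 5) (N.symm w) := by
      rw [← hnights, hM (N.symm w), Equiv.apply_symm_apply]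
      exact Finset.mem_singleton_self w
    have hmemc : w ∈ proposals Jc (nights Jc 5) (N.symm w) := by
      rwa [← nights_congr hm hw, ← proposals_congr hm]
    have := (key_single p w).2 (N.symm w) hmemc
    exact this
  · -- the joint lie by women 0 and 1
    refine ⟨0, 1, by decide, f2, hf2, N2, ?_, ?_, ?_, ?_⟩
    · exact ⟨6, funext fun m => (key_joint m).1, fun m => (key_joint m).2⟩
    · show wp 0 (N2.symm 0) < wp 0 ((Equiv.refl (Fin 4)).symm 0)
      decide
    · show wp 1 (N2.symm 1) < wp 1 ((Equiv.refl (Fin 4)).symm 1)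
      decide
    · intro h
      exact h ⟨2, 1, by decide, by decide, by decide⟩
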